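/- The subgroup of GL(2,ℤ) generated by the six matrices f₀ = [[1,2],[0,−1]], f₁ = [[0,1],[1,0]], τ₁² = [[1,2],[0,1]], τ₂² = [[1,0],[−2,1]], r̄₁ = [[−1,0],[0,1]], r̄₂ = [[1,0],[0,−1]] is exactly 𝒳, the set of matrices in GL(2,ℤ) whose two column sums are both odd. -/

import Mathlib

open Matrix

/-- Membership in `𝒳`: both column sums of `g` are odd. -/
def memX (g : Matrix.GeneralLinearGroup (Fin 2) ℤ) : Prop :=
  ((↑g : Matrix (Fin 2) (Fin 2) ℤ) 0 0 + (↑g : Matrix (Fin 2) (Fin 2) ℤ) 1 0) % 2 = 1 ∧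
  ((↑g : Matrix (Fin 2) (Fin 2) ℤ) 0 1 + (↑g : Matrix (Fin 2) (Fin 2) ℤ) 1 1) % 2 = 1

/-- `f₀ = [[1,2],[0,−1]]` as an element of `GL(2,ℤ)`. -/
def f0U : Matrix.GeneralLinearGroup (Fin 2) ℤ :=
  ⟨!![1, 2; 0, -1], !![1, 2; 0, -1], by decide, by decide⟩

/-- `f₁ = [[0,1],[1,0]]` as an element of `GL(2,ℤ)`. -/
def f1U : Matrix.GeneralLinearGroup (Fin 2) ℤ :=
  ⟨!![0, 1; 1, 0], !![0, 1; 1, 0], by decide, by decide⟩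

/-- `τ₁² = [[1,2],[0,1]]` as an element of `GL(2,ℤ)`. -/
def tau1sqU : Matrix.GeneralLinearGroup (Fin 2) ℤ :=
  ⟨!![1, 2; 0, 1], !![1, -2; 0, 1], by decide, by decide⟩

/-- `τ₂² = [[1,0],[−2,1]]` as an element of `GL(2,ℤ)`. -/
def tau2sqU : Matrix.GeneralLinearGroup (Fin 2) ℤ :=
  ⟨!![1, 0; -2, 1], !![1, 0; 2, 1], by decide, by decide⟩

/-- `r̄₁ = [[−1,0],[0,1]]` as an element of `GL(2,ℤ)`. -/
def rbar1U : Matrix.GeneralLinearGroup (Fin 2) ℤ :=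
  ⟨!![-1, 0; 0, 1], !![-1, 0; 0, 1], by decide, by decide⟩

/-- `r̄₂ = [[1,0],[0,−1]]` as an element of `GL(2,ℤ)`. -/
def rbar2U : Matrix.GeneralLinearGroup (Fin 2) ℤ :=
  ⟨!![1, 0; 0, -1], !![1, 0; 0, -1], by decide, by decide⟩

/- ======================= auxiliary material ======================= -/

namespace ClosureSixAux

abbrev Mat := Matrix (Fin 2) (Fin 2) ℤ
abbrev GLZ := Matrix.GeneralLinearGroup (Fin 2) ℤ

def Sgen : Set GLZ := {f0U, f1U, tau1sqU, tau2sqU, rbar1U, rbar2U}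

lemma key1 {p q x y : ℤ} (hp : p % 2 = 1) (hq : q % 2 = 1) (hxy : (x + y) % 2 = 1) :
    (p * x + q * y) % 2 = 1 := by
  obtain ⟨k, hk⟩ : ∃ k, p = 2 * k + 1 := ⟨p / 2, by omega⟩
  obtain ⟨m, hm⟩ : ∃ m, q = 2 * m + 1 := ⟨q / 2, by omega⟩
  subst hk hm
  have h : (2 * k + 1) * x + (2 * m + 1) * y = (x + y) + 2 * (k * x + m * y) := by ring
  rw [h, Int.add_mul_emod_self_left, hxy]

lemma key2 {p q x y : ℤ} (hp : p % 2 = 1) (hq : q % 2 = 1) (h : p * x + q * y = 1) :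
    (x + y) % 2 = 1 := by
  obtain ⟨k, hk⟩ : ∃ k, p = 2 * k + 1 := ⟨p / 2, by omega⟩
  obtain ⟨m, hm⟩ : ∃ m, q = 2 * m + 1 := ⟨q / 2, by omega⟩
  subst hk hm
  have h2 : x + y = 1 - 2 * (k * x + m * y) := by linear_combination h
  omega

lemma memX_mul {u v : GLZ} (hu : memX u) (hv : memX v) : memX (u * v) := by
  obtain ⟨hu1, hu2⟩ := hu
  obtain ⟨hv1, hv2⟩ := hv
  constructor
  · have e : (↑(u * v) : Mat) 0 0 + (↑(u * v) : Mat) 1 0 =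
        ((↑u : Mat) 0 0 + (↑u : Mat) 1 0) * (↑v : Mat) 0 0 +
        ((↑u : Mat) 0 1 + (↑u : Mat) 1 1) * (↑v : Mat) 1 0 := by
      simp [Units.val_mul, Matrix.mul_apply, Fin.sum_univ_two]; ring
    rw [e]; exact key1 hu1 hu2 hv1
  · have e : (↑(u * v) : Mat) 0 1 + (↑(u * v) : Mat) 1 1 =
        ((↑u : Mat) 0 0 + (↑u : Mat) 1 0) * (↑v : Mat) 0 1 +
        ((↑u : Mat) 0 1 + (↑u : Mat) 1 1) * (↑v : Mat) 1 1 := by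
      simp [Units.val_mul, Matrix.mul_apply, Fin.sum_univ_two]; ring
    rw [e]; exact key1 hu1 hu2 hv2

lemma memX_inv {u : GLZ} (hu : memX u) : memX u⁻¹ := by
  obtain ⟨hu1, hu2⟩ := hu
  have h := u.mul_inv
  have e00 := congrFun (congrFun h 0) 0
  have e10 := congrFun (congrFun h 1) 0
  have e01 := congrFun (congrFun h 0) 1
  have e11 := congrFun (congrFun h 1) 1
  simp [Matrix.mul_apply, Fin.sum_univ_two, Matrix.one_apply] at e00 e10 e01 e11
  have hval : (↑u⁻¹ : Mat) = (↑u : Mat)⁻¹ := Matrix.coe_units_inv u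
  refine ⟨?_, ?_⟩ <;> rw [hval]
  · exact key2 hu1 hu2 (by linear_combination e00 + e10)
  · exact key2 hu1 hu2 (by linear_combination e01 + e11)

lemma diag_pm {g : GLZ} (hc : (↑g : Mat) 1 0 = 0) :
    ((↑g : Mat) 0 0 = 1 ∨ (↑g : Mat) 0 0 = -1) ∧
    ((↑g : Mat) 1 1 = 1 ∨ (↑g : Mat) 1 1 = -1) := by
  have h1 := g.mul_inv
  have h2 := g.inv_mul
  have e11 := congrFun (congrFun h1 1) 1
  have e00 := congrFun (congrFun h2 0) 0
  simp [Matrix.mul_apply, Fin.sum_univ_two, Matrix.one_apply, hc] at e11 e00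
  constructor
  · exact Int.isUnit_iff.mp (IsUnit.of_mul_eq_one (((↑g : Mat))⁻¹ 0 0)
      (by linear_combination e00))
  · exact Int.isUnit_iff.mp (IsUnit.of_mul_eq_one _ e11)

lemma hf0 : f0U ∈ Subgroup.closure Sgen := Subgroup.subset_closure (by simp [Sgen])
lemma hf1 : f1U ∈ Subgroup.closure Sgen := Subgroup.subset_closure (by simp [Sgen])
lemma htau1 : tau1sqU ∈ Subgroup.closure Sgen := Subgroup.subset_closure (by simp [Sgen])
lemma htau2 : tau2sqU ∈ Subgroup.closure Sgen := Subgroup.subset_closure (by simp [Sgen])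
lemma hr1 : rbar1U ∈ Subgroup.closure Sgen := Subgroup.subset_closure (by simp [Sgen])
lemma hr2 : rbar2U ∈ Subgroup.closure Sgen := Subgroup.subset_closure (by simp [Sgen])

lemma memX_f0 : memX f0U := ⟨by decide, by decide⟩
lemma memX_f1 : memX f1U := ⟨by decide, by decide⟩
lemma memX_tau1 : memX tau1sqU := ⟨by decide, by decide⟩
lemma memX_tau2 : memX tau2sqU := ⟨by decide, by decide⟩
lemma memX_r1 : memX rbar1U := ⟨by decide, by decide⟩
lemma memX_r2 : memX rbar2U := ⟨by decide, by decide⟩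

lemma tau1_val : ((tau1sqU : GLZ) : Mat) = !![1, 2; 0, 1] := rfl
lemma tau2_val : ((tau2sqU : GLZ) : Mat) = !![1, 0; -2, 1] := rfl
lemma f1_val : ((f1U : GLZ) : Mat) = !![0, 1; 1, 0] := rfl

lemma tau1_inv_val : ((tau1sqU⁻¹ : GLZ) : Mat) = !![1, -2; 0, 1] := rfl
lemma tau2_inv_val : ((tau2sqU⁻¹ : GLZ) : Mat) = !![1, 0; 2, 1] := rfl

lemma mem_shift {u g : GLZ} (hu : u ∈ Subgroup.closure Sgen)
    (h : u * g ∈ Subgroup.closure Sgen) : g ∈ Subgroup.closure Sgen := by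
  have h2 := mul_mem (inv_mem hu) h
  simpa using h2

lemma diag_mem {g : GLZ} (hc : (↑g : Mat) 1 0 = 0) (hb : (↑g : Mat) 0 1 = 0) :
    g ∈ Subgroup.closure Sgen := by
  obtain ⟨ha, hd⟩ := diag_pm hc
  have key : ∀ u : GLZ, (↑g : Mat) = (↑u : Mat) → u ∈ Subgroup.closure Sgen →
      g ∈ Subgroup.closure Sgen := fun u h hu => (Units.ext h) ▸ hu
  rcases ha with ha | ha <;> rcases hd with hd | hd
  · exact key 1 (by rw [Matrix.eta_fin_two (↑g : Mat), ha, hb, hc, hd]; decide) (one_mem _)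
  · exact key rbar2U (by rw [Matrix.eta_fin_two (↑g : Mat), ha, hb, hc, hd]; decide) hr2
  · exact key rbar1U (by rw [Matrix.eta_fin_two (↑g : Mat), ha, hb, hc, hd]; decide) hr1
  · exact key (rbar1U * rbar2U)
      (by rw [Matrix.eta_fin_two (↑g : Mat), ha, hb, hc, hd]; decide)
      (mul_mem hr1 hr2)

lemma upper_mem : ∀ n : ℕ, ∀ g : GLZ, (↑g : Mat) 1 0 = 0 →
    ((↑g : Mat) 0 1).natAbs ≤ n → memX g → g ∈ Subgroup.closure Sgen := by
  intro n
  induction n with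
  | zero =>
    intro g hc hb hg
    exact diag_mem hc (by omega)
  | succ n ih =>
    intro g hc hb hg
    by_cases hb0 : (↑g : Mat) 0 1 = 0
    · exact diag_mem hc hb0
    · obtain ⟨-, hd⟩ := diag_pm hc
      have hbd := hg.2
      -- b is even, so |b| ≥ 2
      by_cases hs : (0 < (↑g : Mat) 0 1 ∧ (↑g : Mat) 1 1 = 1) ∨
          ((↑g : Mat) 0 1 < 0 ∧ (↑g : Mat) 1 1 = -1)
      · -- use tau1sqU⁻¹ : b ← b - 2d
        apply mem_shift (inv_mem htau1)
        have ec : (↑(tau1sqU⁻¹ * g) : Mat) 1 0 = (↑g : Mat) 1 0 := by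
          rw [Units.val_mul, tau1_inv_val]; simp [Matrix.mul_apply, Fin.sum_univ_two]; try ring
        have eb : (↑(tau1sqU⁻¹ * g) : Mat) 0 1 = (↑g : Mat) 0 1 - 2 * (↑g : Mat) 1 1 := by
          rw [Units.val_mul, tau1_inv_val]; simp [Matrix.mul_apply, Fin.sum_univ_two]; try ring
        refine ih _ (by rw [ec]; exact hc) ?_ (memX_mul (memX_inv memX_tau1) hg)
        rw [eb]; omega
      · -- use tau1sqU : b ← b + 2d
        apply mem_shift htau1
        have ec : (↑(tau1sqU * g) : Mat) 1 0 = (↑g : Mat) 1 0 := by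
          rw [Units.val_mul, tau1_val]; simp [Matrix.mul_apply, Fin.sum_univ_two]; try ring
        have eb : (↑(tau1sqU * g) : Mat) 0 1 = (↑g : Mat) 0 1 + 2 * (↑g : Mat) 1 1 := by
          rw [Units.val_mul, tau1_val]; simp [Matrix.mul_apply, Fin.sum_univ_two]; try ring
        refine ih _ (by rw [ec]; exact hc) ?_ (memX_mul memX_tau1 hg)
        rw [eb]; omega

lemma main_mem : ∀ n : ℕ, ∀ g : GLZ,
    ((↑g : Mat) 0 0).natAbs + ((↑g : Mat) 1 0).natAbs ≤ n →
    memX g → g ∈ Subgroup.closure Sgen := by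
  intro n
  induction n with
  | zero =>
    intro g hn hg
    exact upper_mem _ g (by omega) le_rfl hg
  | succ n ih =>
    intro g hn hg
    by_cases hc0 : (↑g : Mat) 1 0 = 0
    · exact upper_mem _ g hc0 le_rfl hg
    by_cases ha0 : (↑g : Mat) 0 0 = 0
    · -- swap rows with f1U
      apply mem_shift hf1
      have ec : (↑(f1U * g) : Mat) 1 0 = (↑g : Mat) 0 0 := by
        rw [Units.val_mul, f1_val]; simp [Matrix.mul_apply, Fin.sum_univ_two]; try ring
      exact upper_mem _ _ (by rw [ec]; exact ha0) le_rfl (memX_mul memX_f1 hg)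
    · have hpar := hg.1
      have hne : ((↑g : Mat) 0 0).natAbs ≠ ((↑g : Mat) 1 0).natAbs := by omega
      rcases hne.lt_or_gt with hlt | hlt
      · -- |a| < |c| : reduce c using tau2sqU (c ← c - 2a) or tau2sqU⁻¹ (c ← c + 2a)
        by_cases hs : (0 < (↑g : Mat) 0 0 ∧ 0 < (↑g : Mat) 1 0) ∨
            ((↑g : Mat) 0 0 < 0 ∧ (↑g : Mat) 1 0 < 0)
        · apply mem_shift htau2
          have ea : (↑(tau2sqU * g) : Mat) 0 0 = (↑g : Mat) 0 0 := by
            rw [Units.val_mul, tau2_val]; simp [Matrix.mul_apply, Fin.sum_univ_two]; try ring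
          have ec : (↑(tau2sqU * g) : Mat) 1 0 = (↑g : Mat) 1 0 - 2 * (↑g : Mat) 0 0 := by
            rw [Units.val_mul, tau2_val]; simp [Matrix.mul_apply, Fin.sum_univ_two]; try ring
          refine ih _ ?_ (memX_mul memX_tau2 hg)
          rw [ea, ec]; omega
        · apply mem_shift (inv_mem htau2)
          have ea : (↑(tau2sqU⁻¹ * g) : Mat) 0 0 = (↑g : Mat) 0 0 := by
            rw [Units.val_mul, tau2_inv_val]; simp [Matrix.mul_apply, Fin.sum_univ_two]; try ring
          have ec : (↑(tau2sqU⁻¹ * g) : Mat) 1 0 = (↑g : Mat) 1 0 + 2 * (↑g : Mat) 0 0 := by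
            rw [Units.val_mul, tau2_inv_val]; simp [Matrix.mul_apply, Fin.sum_univ_two]; try ring
          refine ih _ ?_ (memX_mul (memX_inv memX_tau2) hg)
          rw [ea, ec]; omega
      · -- |c| < |a| : reduce a using tau1sqU (a ← a + 2c) or tau1sqU⁻¹ (a ← a - 2c)
        by_cases hs : (0 < (↑g : Mat) 0 0 ∧ 0 < (↑g : Mat) 1 0) ∨
            ((↑g : Mat) 0 0 < 0 ∧ (↑g : Mat) 1 0 < 0)
        · apply mem_shift (inv_mem htau1)
          have ea : (↑(tau1sqU⁻¹ * g) : Mat) 0 0 = (↑g : Mat) 0 0 - 2 * (↑g : Mat) 1 0 := by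
            rw [Units.val_mul, tau1_inv_val]; simp [Matrix.mul_apply, Fin.sum_univ_two]; try ring
          have ec : (↑(tau1sqU⁻¹ * g) : Mat) 1 0 = (↑g : Mat) 1 0 := by
            rw [Units.val_mul, tau1_inv_val]; simp [Matrix.mul_apply, Fin.sum_univ_two]; try ring
          refine ih _ ?_ (memX_mul (memX_inv memX_tau1) hg)
          rw [ea, ec]; omega
        · apply mem_shift htau1
          have ea : (↑(tau1sqU * g) : Mat) 0 0 = (↑g : Mat) 0 0 + 2 * (↑g : Mat) 1 0 := by
            rw [Units.val_mul, tau1_val]; simp [Matrix.mul_apply, Fin.sum_univ_two]; try ring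
          have ec : (↑(tau1sqU * g) : Mat) 1 0 = (↑g : Mat) 1 0 := by
            rw [Units.val_mul, tau1_val]; simp [Matrix.mul_apply, Fin.sum_univ_two]; try ring
          refine ih _ ?_ (memX_mul memX_tau1 hg)
          rw [ea, ec]; omega

end ClosureSixAux

open ClosureSixAux in
/-- the subgroup of `GL(2,ℤ)` generated by `f₀, f₁, τ₁², τ₂², r̄₁, r̄₂`
is exactly `𝒳`, the set of matrices whose two column sums are both odd. -/
theorem closure_six_eq_X (g : Matrix.GeneralLinearGroup (Fin 2) ℤ) :
    g ∈ Subgroup.closure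
        ({f0U, f1U, tau1sqU, tau2sqU, rbar1U, rbar2U} :
          Set (Matrix.GeneralLinearGroup (Fin 2) ℤ)) ↔ memX g := by
  show g ∈ Subgroup.closure Sgen ↔ memX g
  constructor
  · intro h
    refine Subgroup.closure_induction ?_ ?_ ?_ ?_ h
    · intro x hx
      simp only [Sgen, Set.mem_insert_iff, Set.mem_singleton_iff] at hx
      rcases hx with rfl | rfl | rfl | rfl | rfl | rfl
      exacts [memX_f0, memX_f1, memX_tau1, memX_tau2, memX_r1, memX_r2]
    · exact ⟨by simp, by simp⟩
    · exact fun x y _ _ hx hy => memX_mul hx hy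
    · exact fun x _ hx => memX_inv hx
  · intro hx
    exact main_mem _ g le_rfl hx
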